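/- Let A : [0,1] → M_m(ℝ) be a continuous matrix-valued function satisfying A(x)ᵀ = A(1−x) for all x ∈ [0,1]. If U : [0,1] → M_m(ℝ) is differentiable with U′(x) = −(1/2)A(x)U(x) and U(0) = E, then the monodromy matrix U(1) is symmetric positive definite. (Remark 4.2(b), after Yudovich) -/

import Mathlib

open Matrix Set

attribute [local instance] Matrix.normedAddCommGroup Matrix.normedSpace

/-- Remark 4.2(b) (after Yudovich): if the continuous matrix function `A` on `[0,1]`
satisfies `A(x)ᵀ = A(1−x)` and `U` solves `U′ = −(1/2)A(x)U`, `U(0) = E` on `[0,1]`,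
then the monodromy matrix `U(1)` is symmetric positive definite. -/
theorem stmt4 (m : ℕ) (hm : 1 ≤ m)
    (A : ℝ → Matrix (Fin m) (Fin m) ℝ) (hAcont : ContinuousOn A (Icc 0 1))
    (hAsymm : ∀ x ∈ Icc (0:ℝ) 1, (A x)ᵀ = A (1 - x))
    (U : ℝ → Matrix (Fin m) (Fin m) ℝ) (hU0 : U 0 = 1)
    (hU : ∀ x ∈ Icc (0:ℝ) 1, HasDerivWithinAt U (-(1/2 : ℝ) • (A x * U x)) (Icc 0 1) x) :
    (U 1).IsSymm ∧ (U 1).PosDef := by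
  have hmaps : MapsTo (fun t : ℝ => 1 - t) (Icc 0 1) (Icc 0 1) := by
    intro t ht
    simp only [mem_Icc] at ht ⊢
    constructor <;> linarith
  -- derivative of the time-reversed solution
  have hUrev : ∀ x ∈ Icc (0:ℝ) 1, HasDerivWithinAt (fun t => U (1 - t))
      ((1/2 : ℝ) • (A (1-x) * U (1-x))) (Icc 0 1) x := by
    intro x hx
    have h1x : (1 - x) ∈ Icc (0:ℝ) 1 := hmaps hx
    have hc : HasDerivWithinAt (fun t : ℝ => 1 - t) (-1) (Icc 0 1) x := by
      simpa using (hasDerivWithinAt_id x (Icc (0:ℝ) 1)).const_sub 1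
    have h := (hU (1-x) h1x).scomp x hc hmaps
    rw [show (1/2:ℝ) • (A (1-x) * U (1-x)) = (-1:ℝ) • -(1/2:ℝ) • (A (1-x) * U (1-x)) by
      rw [smul_smul]; norm_num]
    exact h
  -- the function x ↦ U(1-x)ᵀ * U x is constant on [0,1]
  have key : ∀ x ∈ Icc (0:ℝ) 1, (U (1 - x))ᵀ * U x = (U 1)ᵀ * U 0 := by
    intro x hx
    ext i j
    set f : ℝ → ℝ := fun y => ∑ k, U (1-y) k i * U y k j with hf
    have hfder : ∀ y ∈ Icc (0:ℝ) 1, HasDerivWithinAt f 0 (Icc 0 1) y := by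
      intro y hy
      have h1y : (1 - y) ∈ Icc (0:ℝ) 1 := hmaps hy
      set E1 : Matrix (Fin m) (Fin m) ℝ := (1/2 : ℝ) • (A (1-y) * U (1-y)) with hE1
      set E2 : Matrix (Fin m) (Fin m) ℝ := -(1/2 : ℝ) • (A y * U y) with hE2
      have hd : HasDerivWithinAt f
          (∑ k, (E1 k i * U y k j + U (1-y) k i * E2 k j)) (Icc 0 1) y := by
        apply HasDerivWithinAt.fun_sum
        intro k _
        exact (hasDerivWithinAt_pi.1 (hasDerivWithinAt_pi.1 (hUrev y hy) k) i).mul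
          (hasDerivWithinAt_pi.1 (hasDerivWithinAt_pi.1 (hU y hy) k) j)
      have hzero : (∑ k, (E1 k i * U y k j + U (1-y) k i * E2 k j)) = 0 := by
        have h1 : (A (1-y))ᵀ = A y := by
          have := hAsymm (1-y) h1y
          simpa using this
        have hmat : E1ᵀ * U y + (U (1-y))ᵀ * E2 = 0 := by
          rw [hE1, hE2, transpose_smul, transpose_mul, h1]
          rw [Matrix.smul_mul, Matrix.mul_smul, Matrix.mul_assoc]
          rw [← add_smul, add_neg_cancel, zero_smul]
        have := congrFun (congrFun hmat i) j
        simpa [Matrix.add_apply, Matrix.mul_apply, Matrix.transpose_apply,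
          Finset.sum_add_distrib] using this
      rwa [hzero] at hd
    have hcont : ContinuousOn f (Icc 0 1) := fun y hy => (hfder y hy).continuousWithinAt
    have hright : ∀ y ∈ Ico (0:ℝ) 1, HasDerivWithinAt f 0 (Ici y) y := by
      intro y hy
      refine (hfder y ⟨hy.1, hy.2.le⟩).mono_of_mem_nhdsWithin ?_
      rw [mem_nhdsWithin]
      exact ⟨Iio 1, isOpen_Iio, hy.2, fun z hz => ⟨le_trans hy.1 hz.2, le_of_lt hz.1⟩⟩
    have := constant_of_has_deriv_right_zero hcont hright x hx
    have hfx : f x = ((U (1-x))ᵀ * U x) i j := by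
      simp [hf, Matrix.mul_apply, Matrix.transpose_apply]
    have hf0 : f 0 = ((U 1)ᵀ * U 0) i j := by
      simp [hf, Matrix.mul_apply, Matrix.transpose_apply]
    rw [← hfx, ← hf0]
    exact this
  -- symmetry of U 1
  have hsymm : (U 1)ᵀ = U 1 := by
    have h1 := key 1 ⟨zero_le_one, le_refl 1⟩
    have h0 : (1:ℝ) - 1 = 0 := by norm_num
    rw [h0, hU0] at h1
    simpa using h1.symm
  -- U 1 = (U (1/2))ᵀ * U (1/2)
  have hhalf : (U (1/2 : ℝ))ᵀ * U (1/2 : ℝ) = U 1 := by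
    have h := key (1/2) ⟨by norm_num, by norm_num⟩
    have h0 : (1:ℝ) - 1/2 = 1/2 := by norm_num
    rw [h0, hU0, Matrix.mul_one] at h
    rw [h, hsymm]
  -- kernel of U(1/2) is trivial, via backward ODE uniqueness
  obtain ⟨C, hC⟩ := isCompact_Icc.exists_bound_of_continuousOn hAcont
  have hC0 : 0 ≤ C := le_trans (norm_nonneg (A 0)) (hC 0 ⟨le_refl 0, zero_le_one⟩)
  set σ : ℝ → ℝ := fun t => min 1 (max 0 t) with hσ
  have hσmem : ∀ t, σ t ∈ Icc (0:ℝ) 1 := fun t =>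
    ⟨le_min zero_le_one (le_max_left 0 t), min_le_left _ _⟩
  have hσeq : ∀ t ∈ Icc (0:ℝ) 1, σ t = t := by
    intro t ht
    simp [hσ, max_eq_right ht.1, min_eq_right ht.2]
  have hbound : ∀ B : Matrix (Fin m) (Fin m) ℝ, ‖B‖ ≤ C → ∀ u : Fin m → ℝ,
      ‖B *ᵥ u‖ ≤ (m : ℝ) * C * ‖u‖ := by
    intro B hB u
    rw [pi_norm_le_iff_of_nonneg (by positivity)]
    intro i
    calc ‖(B *ᵥ u) i‖ = |∑ j, B i j * u j| := by
          simp [Matrix.mulVec, dotProduct, Real.norm_eq_abs]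
      _ ≤ ∑ j, |B i j * u j| := Finset.abs_sum_le_sum_abs _ _
      _ ≤ ∑ _j : Fin m, C * ‖u‖ := by
          apply Finset.sum_le_sum
          intro j _
          rw [abs_mul]
          exact mul_le_mul (le_trans (Matrix.norm_entry_le_entrywise_sup_norm B) hB)
            (norm_le_pi_norm u j) (abs_nonneg _) hC0
      _ = (m : ℝ) * C * ‖u‖ := by
          simp [Finset.sum_const, Finset.card_univ]
          ring
  set Kr : ℝ := (m : ℝ) * C / 2 with hKr
  have hKr0 : 0 ≤ Kr := by positivity
  have hlip : ∀ t, LipschitzWith Kr.toNNReal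
      (fun w : Fin m → ℝ => -(1/2 : ℝ) • (A (σ t) *ᵥ w)) := by
    intro t
    apply LipschitzWith.of_dist_le_mul
    intro w1 w2
    rw [dist_eq_norm, dist_eq_norm, Real.coe_toNNReal _ hKr0]
    have hdiff : -(1/2 : ℝ) • (A (σ t) *ᵥ w1) - -(1/2 : ℝ) • (A (σ t) *ᵥ w2)
        = -(1/2 : ℝ) • (A (σ t) *ᵥ (w1 - w2)) := by
      rw [Matrix.mulVec_sub, smul_sub]
    rw [hdiff, norm_smul]
    have hb := hbound _ (hC _ (hσmem t)) (w1 - w2)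
    have hn : ‖(-(1/2) : ℝ)‖ = 1/2 := by norm_num
    rw [hn]
    calc (1/2 : ℝ) * ‖A (σ t) *ᵥ (w1 - w2)‖ ≤ (1/2) * ((m : ℝ) * C * ‖w1 - w2‖) := by linarith
      _ = Kr * ‖w1 - w2‖ := by rw [hKr]; ring
  have hker : ∀ w : Fin m → ℝ, U (1/2 : ℝ) *ᵥ w = 0 → w = 0 := by
    intro w hw
    -- y t = U t *ᵥ w solves the linear ODE, vanishes at 1/2, hence at 0
    have hy : ∀ s ∈ Icc (0:ℝ) 1, HasDerivWithinAt (fun t => U t *ᵥ w)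
        (-(1/2 : ℝ) • (A s *ᵥ (U s *ᵥ w))) (Icc 0 1) s := by
      intro s hs
      let L : Matrix (Fin m) (Fin m) ℝ →ₗ[ℝ] (Fin m → ℝ) :=
        { toFun := fun B => B *ᵥ w
          map_add' := fun B C => Matrix.add_mulVec B C w
          map_smul' := fun c B => Matrix.smul_mulVec c B w }
      have h := (L.toContinuousLinearMap.hasFDerivAt (x := U s)).comp_hasDerivWithinAt s (hU s hs)
      have heq : L (-(1/2 : ℝ) • (A s * U s)) = -(1/2 : ℝ) • (A s *ᵥ (U s *ᵥ w)) := by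
        simp [L, Matrix.neg_mulVec, Matrix.smul_mulVec, Matrix.mulVec_mulVec]
      have h2 : HasDerivWithinAt (fun t => U t *ᵥ w) (L (-(1/2 : ℝ) • (A s * U s))) (Icc 0 1) s := h
      rw [heq] at h2; exact h2
    have hf' : ∀ t ∈ Ioc (0:ℝ) (1/2), HasDerivWithinAt (fun t => U t *ᵥ w)
        (-(1/2 : ℝ) • (A (σ t) *ᵥ (U t *ᵥ w))) (Iic t) t := by
      intro t ht
      have ht1 : t ∈ Icc (0:ℝ) 1 := ⟨ht.1.le, le_trans ht.2 (by norm_num)⟩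
      rw [hσeq t ht1]
      refine (hy t ht1).mono_of_mem_nhdsWithin ?_
      rw [mem_nhdsWithin]
      exact ⟨Ioi 0, isOpen_Ioi, ht.1,
        fun z hz => ⟨hz.1.le, le_trans hz.2 (le_trans ht.2 (by norm_num))⟩⟩
    have hg' : ∀ t ∈ Ioc (0:ℝ) (1/2), HasDerivWithinAt (fun _ : ℝ => (0 : Fin m → ℝ))
        (-(1/2 : ℝ) • (A (σ t) *ᵥ (0 : Fin m → ℝ))) (Iic t) t := by
      intro t ht
      simpa [Matrix.mulVec_zero] using
        (hasDerivWithinAt_const t (Iic t) (0 : Fin m → ℝ))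
    have hfc : ContinuousOn (fun t => U t *ᵥ w) (Icc (0:ℝ) (1/2)) := by
      intro s hs
      have hs1 : s ∈ Icc (0:ℝ) 1 := ⟨hs.1, le_trans hs.2 (by norm_num)⟩
      exact ((hy s hs1).continuousWithinAt).mono
        (fun z hz => ⟨hz.1, le_trans hz.2 (by norm_num)⟩)
    have hlip' : ∀ t, LipschitzOnWith Kr.toNNReal
        (fun w : Fin m → ℝ => -(1/2 : ℝ) • (A (σ t) *ᵥ w)) univ :=
      fun t => (hlip t).lipschitzOnWith
    have huniq := ODE_solution_unique_of_mem_Icc_left (v := fun t w => -(1/2 : ℝ) • (A (σ t) *ᵥ w))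
      (s := fun _ => univ) (fun t _ => hlip' t)
      hfc hf' (fun _ _ => mem_univ _) continuousOn_const hg' (fun _ _ => mem_univ _) hw
    have h0 := huniq ⟨le_refl (0:ℝ), by norm_num⟩
    simpa [hU0, Matrix.one_mulVec] using h0
  -- assemble
  have hIsSymm : (U 1).IsSymm := hsymm
  refine ⟨hIsSymm, Matrix.posDef_iff_dotProduct_mulVec.2 ⟨?_, ?_⟩⟩
  · rw [Matrix.IsHermitian, conjTranspose_eq_transpose_of_trivial]
    exact hsymm
  · intro x hx
    have hxw : U (1/2 : ℝ) *ᵥ x ≠ 0 := fun h => hx (hker x h)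
    have hsx : star x = x := by
      funext i
      exact star_trivial _
    rw [hsx, ← hhalf, ← Matrix.mulVec_mulVec, Matrix.dotProduct_mulVec,
      Matrix.vecMul_transpose]
    have : star (U (1/2 : ℝ) *ᵥ x) = U (1/2 : ℝ) *ᵥ x := by
      funext i
      exact star_trivial _
    rw [show (U (1/2 : ℝ) *ᵥ x) ⬝ᵥ (U (1/2 : ℝ) *ᵥ x)
        = (U (1/2 : ℝ) *ᵥ x) ⬝ᵥ star (U (1/2 : ℝ) *ᵥ x) from by rw [this]]
    exact Matrix.dotProduct_self_star_pos_iff.2 hxw
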